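/- Let p ≥ 2 be a natural number, k > 0, w₀ > 0, T > 0, and let w : [0, T) → ℝ be differentiable with w(0) = w₀ and w'(t) ≥ k·w(t)^p for all t ∈ [0, T). Then for every t ∈ [0, T) with k·(p-1)·t·w₀^{p-1} < 1 one has w(t) ≥ w₀ · (1 - k·(p-1)·t·w₀^{p-1})^{-1/(p-1)}. Consequently, T ≤ 1/(k·(p-1)·w₀^{p-1}). -/

import Mathlib

open Set

/-- ODE comparison/blow-up lemma: if `w` is differentiable on `[0,T)` with `w 0 = w₀ > 0` and
`w' t ≥ k w t ^ p` on `[0,T)`, then `w t ≥ w₀ (1 - k(p-1) t w₀^{p-1})^{-1/(p-1)}` whenever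
`k(p-1) t w₀^{p-1} < 1`, and consequently `T ≤ 1/(k(p-1) w₀^{p-1})`. -/
theorem ode_comparison_blowup
    (p : ℕ) (hp : 2 ≤ p) (k w₀ T : ℝ) (hk : 0 < k) (hw₀ : 0 < w₀) (hT : 0 < T)
    (w w' : ℝ → ℝ) (hw0 : w 0 = w₀)
    (hderiv : ∀ t ∈ Set.Ico (0 : ℝ) T, HasDerivWithinAt w (w' t) (Set.Ico (0 : ℝ) T) t)
    (hineq : ∀ t ∈ Set.Ico (0 : ℝ) T, k * w t ^ p ≤ w' t) :
    (∀ t ∈ Set.Ico (0 : ℝ) T, k * ((p : ℝ) - 1) * t * w₀ ^ (p - 1) < 1 →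
      w₀ * (1 - k * ((p : ℝ) - 1) * t * w₀ ^ (p - 1)) ^ (-(1 / ((p : ℝ) - 1))) ≤ w t) ∧
    T ≤ 1 / (k * ((p : ℝ) - 1) * w₀ ^ (p - 1)) := by
  have hq : (1:ℝ) ≤ (p:ℝ) - 1 := by
    have : (2:ℝ) ≤ (p:ℝ) := by exact_mod_cast hp
    linarith
  have hq0 : (0:ℝ) < (p:ℝ) - 1 := by linarith
  have hqne : ((p:ℝ) - 1) ≠ 0 := ne_of_gt hq0
  set r : ℝ := -(1 / ((p:ℝ) - 1)) with hr
  have hwpow : (0:ℝ) < w₀ ^ (p-1) := pow_pos hw₀ _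
  have hw₀p : w₀ ^ p = w₀ * w₀ ^ (p - 1) := by
    conv_lhs => rw [show p = 1 + (p - 1) by omega]
    rw [pow_add, pow_one]
  -- derivative of the comparison function, for any coefficient κ and any x with positive base
  have hφd : ∀ κ x : ℝ, 0 < 1 - κ * ((p:ℝ) - 1) * x * w₀ ^ (p-1) →
      HasDerivAt (fun t => w₀ * (1 - κ * ((p:ℝ) - 1) * t * w₀ ^ (p-1)) ^ r)
        (κ * w₀ ^ p * (1 - κ * ((p:ℝ) - 1) * x * w₀ ^ (p-1)) ^ (r - 1)) x := by
    intro κ x hg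
    have hbase : HasDerivAt (fun t : ℝ => 1 - κ * ((p:ℝ) - 1) * t * w₀ ^ (p-1))
        (-(κ * ((p:ℝ) - 1) * 1 * w₀ ^ (p-1))) x :=
      (((hasDerivAt_id x).const_mul (κ * ((p:ℝ) - 1))).mul_const (w₀ ^ (p-1))).const_sub 1
    have := (HasDerivAt.rpow_const (p := r) hbase (Or.inl (ne_of_gt hg))).const_mul w₀
    refine this.congr_deriv ?_
    rw [hw₀p, hr]
    field_simp
  -- the comparison lemma for κ < k
  have key : ∀ κ, 0 < κ → κ < k → ∀ b, 0 ≤ b → b < T →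
      κ * ((p:ℝ) - 1) * b * w₀ ^ (p-1) < 1 →
      w₀ * (1 - κ * ((p:ℝ) - 1) * b * w₀ ^ (p-1)) ^ r ≤ w b := by
    intro κ hκ0 hκk b hb0 hbT hb1
    set φ : ℝ → ℝ := fun t => w₀ * (1 - κ * ((p:ℝ) - 1) * t * w₀ ^ (p-1)) ^ r with hφ
    have hgpos : ∀ x ∈ Icc (0:ℝ) b, 0 < 1 - κ * ((p:ℝ) - 1) * x * w₀ ^ (p-1) := by
      intro x hx
      have h1 : κ * ((p:ℝ) - 1) * x * w₀ ^ (p-1) ≤ κ * ((p:ℝ) - 1) * b * w₀ ^ (p-1) := by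
        have hc : (0:ℝ) ≤ κ * ((p:ℝ) - 1) * w₀ ^ (p-1) := by positivity
        nlinarith [hx.2]
      linarith
    have hsub : Icc (0:ℝ) b ⊆ Ico (0:ℝ) T := fun x hx => ⟨hx.1, lt_of_le_of_lt hx.2 hbT⟩
    have main : ∀ ⦃x⦄, x ∈ Icc (0:ℝ) b → (fun t => -w t) x ≤ (fun t => -φ t) x := by
      refine image_le_of_deriv_right_lt_deriv_boundary'
        (f := fun t => -w t) (f' := fun t => -w' t) (B := fun t => -φ t)
        (B' := fun x => -(κ * w₀ ^ p * (1 - κ * ((p:ℝ) - 1) * x * w₀ ^ (p-1)) ^ (r - 1)))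
        ?_ ?_ ?_ ?_ ?_ ?_
      · exact fun x hx => ((hderiv x (hsub hx)).continuousWithinAt.mono hsub).neg
      · intro x hx
        have hx' : x ∈ Ico (0:ℝ) T := ⟨hx.1, lt_of_lt_of_le hx.2 (le_of_lt hbT)⟩
        have hmem : Ico (0:ℝ) T ∈ nhdsWithin x (Ici x) :=
          Ico_mem_nhdsGE_of_mem ⟨hx.1, hx'.2⟩
        exact ((hderiv x hx').mono_of_mem_nhdsWithin hmem).neg
      · simp only [hw0]
        have : φ 0 = w₀ := by simp [hφ]
        rw [this]
      · intro x hx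
        exact ((hφd κ x (hgpos x hx)).continuousAt.continuousWithinAt).neg
      · intro x hx
        exact ((hφd κ x (hgpos x (Ico_subset_Icc_self hx))).hasDerivWithinAt).neg
      · intro x hx heq
        have hxI : x ∈ Icc (0:ℝ) b := Ico_subset_Icc_self hx
        have hg := hgpos x hxI
        have hwx : w x = φ x := by
          have := neg_injective heq
          exact this
        have hφpos : 0 < φ x := by
          apply mul_pos hw₀
          exact Real.rpow_pos_of_pos hg r
        have hx' : x ∈ Ico (0:ℝ) T := hsub hxI
        have h1 : k * w x ^ p ≤ w' x := hineq x hx'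
        have hφp : φ x ^ p = w₀ ^ p * (1 - κ * ((p:ℝ) - 1) * x * w₀ ^ (p-1)) ^ (r - 1) := by
          rw [hφ]
          simp only
          rw [mul_pow, ← Real.rpow_natCast ((1 - κ * ((p:ℝ) - 1) * x * w₀ ^ (p-1)) ^ r) p,
            ← Real.rpow_mul (le_of_lt hg)]
          congr 1
          rw [hr]
          field_simp
          ring
        have hlt : κ * w₀ ^ p * (1 - κ * ((p:ℝ) - 1) * x * w₀ ^ (p-1)) ^ (r - 1)
            < k * w x ^ p := by
          rw [hwx, hφp]
          have hXpos : (0:ℝ) < (1 - κ * ((p:ℝ) - 1) * x * w₀ ^ (p-1)) ^ (r - 1) :=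
            Real.rpow_pos_of_pos hg _
          have h2 : (0:ℝ) < w₀ ^ p := pow_pos hw₀ _
          have h3 := mul_lt_mul_of_pos_right hκk (mul_pos h2 hXpos)
          nlinarith [h3]
        linarith
    have := main (right_mem_Icc.2 hb0)
    simp only [neg_le_neg_iff] at this
    exact this
  have hc : (0:ℝ) < k * ((p:ℝ) - 1) * w₀ ^ (p-1) := by positivity
  -- Part 1 by taking κ → k from below
  have part1 : ∀ t ∈ Set.Ico (0 : ℝ) T, k * ((p : ℝ) - 1) * t * w₀ ^ (p - 1) < 1 →
      w₀ * (1 - k * ((p : ℝ) - 1) * t * w₀ ^ (p - 1)) ^ r ≤ w t := by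
    intro t ht ht1
    have hg : 0 < 1 - k * ((p:ℝ) - 1) * t * w₀ ^ (p-1) := by linarith
    have hcont : ContinuousAt (fun κ : ℝ => w₀ * (1 - κ * ((p:ℝ) - 1) * t * w₀ ^ (p-1)) ^ r) k := by
      apply ContinuousAt.mul continuousAt_const
      apply ContinuousAt.rpow_const
      · fun_prop
      · exact Or.inl (ne_of_gt hg)
    have hev : ∀ᶠ κ in nhdsWithin k (Iio k),
        w₀ * (1 - κ * ((p:ℝ) - 1) * t * w₀ ^ (p-1)) ^ r ≤ w t := by
      filter_upwards [Ioo_mem_nhdsLT_of_mem (⟨hk, le_refl k⟩ : k ∈ Ioc 0 k)] with κ hκ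
      have hκt : κ * ((p:ℝ) - 1) * t * w₀ ^ (p-1) < 1 := by
        have : κ * ((p:ℝ) - 1) * t * w₀ ^ (p-1) ≤ k * ((p:ℝ) - 1) * t * w₀ ^ (p-1) := by
          have h4 : (0:ℝ) ≤ ((p:ℝ) - 1) * t * w₀ ^ (p-1) :=
            mul_nonneg (mul_nonneg (by linarith) ht.1) (le_of_lt hwpow)
          nlinarith [hκ.2, h4]
        linarith
      exact key κ hκ.1 hκ.2 t ht.1 ht.2 hκt
    exact le_of_tendsto (hcont.tendsto.mono_left nhdsWithin_le_nhds) hev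
  refine ⟨part1, ?_⟩
  -- Part 2
  by_contra hcon
  push_neg at hcon
  have hsub : Icc (0:ℝ) (1 / (k * ((p:ℝ) - 1) * w₀ ^ (p-1))) ⊆ Ico (0:ℝ) T :=
    fun x hx => ⟨hx.1, lt_of_le_of_lt hx.2 hcon⟩
  have hwc : ContinuousOn w (Icc (0:ℝ) (1 / (k * ((p:ℝ) - 1) * w₀ ^ (p-1)))) :=
    fun x hx => ((hderiv x (hsub hx)).continuousWithinAt.mono hsub)
  set c := k * ((p:ℝ) - 1) * w₀ ^ (p-1) with hcdef
  have hcinv : (0:ℝ) ≤ 1 / c := by positivity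
  obtain ⟨xM, hxM, hMmax'⟩ := (isCompact_Icc).exists_isMaxOn ⟨0, le_refl 0, hcinv⟩ hwc
  set M := w xM with hMdef
  have hMmax : ∀ y ∈ Icc (0:ℝ) (1/c), w y ≤ M := fun y hy => hMmax' hy
  have hMw : w₀ ≤ M := by
    have := hMmax 0 ⟨le_refl 0, hcinv⟩
    rw [hw0] at this
    exact this
  set ρ : ℝ := w₀ / (M + w₀) with hρ
  have hMpos : 0 < M + w₀ := by linarith
  have hρ0 : 0 < ρ := div_pos hw₀ hMpos
  have hρ1 : ρ < 1 := by
    rw [hρ, div_lt_one hMpos]; linarith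
  set ε : ℝ := ρ ^ (p - 1) with hε
  have hε0 : 0 < ε := pow_pos hρ0 _
  have hε1 : ε < 1 := pow_lt_one₀ (le_of_lt hρ0) hρ1 (by omega)
  set t := (1 - ε) / c with htdef
  have ht0 : 0 ≤ t := div_nonneg (by linarith) (le_of_lt hc)
  have htc : t < 1 / c := by
    rw [htdef, div_lt_div_iff_of_pos_right hc]
    nlinarith
  have htT : t < T := lt_trans htc hcon
  have hct : c * t = 1 - ε := by
    rw [htdef]; field_simp
  have h1 : k * ((p:ℝ) - 1) * t * w₀ ^ (p-1) = 1 - ε := by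
    rw [← hct, hcdef]; ring
  have := part1 t ⟨ht0, htT⟩ (by rw [h1]; linarith)
  rw [h1] at this
  have hεr : (1 - (1 - ε)) ^ r = ρ⁻¹ := by
    have h2 : (1:ℝ) - (1 - ε) = ε := by ring
    rw [h2, hε]
    have hcast : ((p - 1 : ℕ) : ℝ) = (p:ℝ) - 1 := by
      have : (1:ℕ) ≤ p := by omega
      push_cast [this]; ring
    rw [← Real.rpow_natCast ρ (p-1), ← Real.rpow_mul (le_of_lt hρ0), hcast, hr]
    rw [show ((p:ℝ) - 1) * -(1 / ((p:ℝ) - 1)) = -1 by field_simp]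
    exact Real.rpow_neg_one ρ
  rw [hεr] at this
  have hρinv : w₀ * ρ⁻¹ = M + w₀ := by
    rw [hρ]
    field_simp
  rw [hρinv] at this
  have hwt : w t ≤ M := hMmax t ⟨ht0, le_of_lt htc⟩
  linarith
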